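/- Let K be a field and identify lines of PG(3,K) with 2-dimensional subspaces of K^4. Let L_1, L_2, L_3 be pairwise disjoint lines (pairwise intersecting in 0) and let M be a common transversal: a line such that x_i := M ∩ L_i is 1-dimensional for i = 1,2,3. (a) Let L be a line with x_1 ⊆ L ⊆ L_1 + M and L_1 ≠ L ≠ M. Then the map φ from the points of L_3 to the points of L_3 given by φ(⟨z⟩) = (L + ((L_1 + ⟨z⟩) ∩ L_2)) ∩ L_3 (the projection of L_3 onto L_2 with centre L_1, followed by the projection of L_2 onto L_3 with centre L) has exactly one fixed point, namely x_3. (b) If |K| > 2 and L' is a line with L' ∩ L_1 ≠ 0 and L' ∩ M ≠ 0, with L' ∩ L_2 = L' ∩ L_3 = 0 and with none of x_1, x_2, x_3 contained in L', then the map ⟨z⟩ ↦ (L' + ((L_1 + ⟨z⟩) ∩ L_2)) ∩ L_3 has exactly two fixed points, one of which is x_3. -/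
import Mathlib


/-!
STATEMENT 7: In PG(3,K) (lines = 2-dimensional subspaces of K⁴), let L₁, L₂, L₃ be
pairwise disjoint lines with a common transversal M, meeting them in points x₁, x₂, x₃.
(a) For a line L through x₁ in the plane ⟨L₁, M⟩ with L₁ ≠ L ≠ M, the composite
projection L₃ → L₂ → L₃ (centres L₁ and L) has exactly one fixed point, namely x₃.
(b) If |K| > 2 and L' meets L₁ and M, is disjoint from L₂ and L₃, and contains none of
x₁, x₂, x₃, then the composite projection with centres L₁ and L' has exactly two fixed
points, one of which is x₃.
-/

open Module Submodule

noncomputable section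

open Module Submodule
noncomputable section
namespace RegulusAux
variable {K : Type} [Field K]

lemma hV4 (K : Type) [Field K] : finrank K (Fin 4 → K) = 4 := by simp

lemma rank1_span (S : Submodule K (Fin 4 → K)) (h : finrank K ↥S = 1) :
    ∃ v : Fin 4 → K, v ≠ 0 ∧ v ∈ S ∧ S = span K {v} := by
  have hbot : S ≠ ⊥ := by
    intro hb
    rw [hb, finrank_bot] at h
    exact one_ne_zero h.symm
  obtain ⟨v, hvS, hv0⟩ := S.ne_bot_iff.mp hbot
  refine ⟨v, hv0, hvS, ?_⟩
  have hle : span K {v} ≤ S := by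
    rw [span_le, Set.singleton_subset_iff]; exact hvS
  exact (Submodule.eq_of_le_of_finrank_le hle (by rw [h, finrank_span_singleton hv0])).symm

lemma sup_rank3 (A : Submodule K (Fin 4 → K)) (hA : finrank K ↥A = 2)
    {v : Fin 4 → K} (hv0 : v ≠ 0) (hv : v ∉ A) :
    finrank K ↥(A ⊔ span K {v}) = 3 := by
  have hinf : A ⊓ span K {v} = ⊥ := by
    rw [eq_bot_iff]
    rintro x ⟨hxA, hxv⟩
    obtain ⟨c, rfl⟩ := mem_span_singleton.mp hxv
    rcases eq_or_ne c 0 with rfl | hc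
    · simp
    · exact absurd ((smul_mem_iff A hc).mp hxA) hv
  have key := Submodule.finrank_sup_add_finrank_inf_eq A (span K {v})
  rw [hinf, finrank_bot, hA, finrank_span_singleton hv0] at key
  omega

lemma inf_rank_eq_span {A B : Submodule K (Fin 4 → K)} (hA : finrank K ↥A = 3)
    (hB : finrank K ↥B = 2) (hsup : A ⊔ B = ⊤) {v : Fin 4 → K}
    (hv0 : v ≠ 0) (hvA : v ∈ A) (hvB : v ∈ B) :
    A ⊓ B = span K {v} := by
  have key := Submodule.finrank_sup_add_finrank_inf_eq A B
  rw [hsup, finrank_top, hV4, hA, hB] at key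
  have hle : span K {v} ≤ A ⊓ B := by
    rw [span_le, Set.singleton_subset_iff]; exact ⟨hvA, hvB⟩
  exact (Submodule.eq_of_le_of_finrank_le hle
    (by rw [finrank_span_singleton hv0]; omega)).symm

lemma pair_disj {A B : Submodule K (Fin 4 → K)} (hAB : A ⊓ B = ⊥)
    {x y : Fin 4 → K} (hx : x ∈ A) (hy : y ∈ B) (hx0 : x ≠ 0) (hy0 : y ≠ 0) :
    ∀ a b : K, a • x + b • y = 0 → a = 0 ∧ b = 0 := by
  intro a b hab
  have h1 : a • x ∈ A ⊓ B := ⟨A.smul_mem a hx, by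
    rw [eq_neg_of_add_eq_zero_left hab]
    exact B.neg_mem (B.smul_mem b hy)⟩
  rw [hAB, mem_bot] at h1
  have ha : a = 0 := by
    rcases smul_eq_zero.mp h1 with h | h
    · exact h
    · exact absurd h hx0
  subst ha
  rw [zero_smul, zero_add] at hab
  rcases smul_eq_zero.mp hab with h | h
  · exact ⟨rfl, h⟩
  · exact absurd h hy0

lemma pair_not_mem {x y : Fin 4 → K} (hx0 : x ≠ 0) (hy : y ∉ span K ({x} : Set (Fin 4 → K))) :
    ∀ a b : K, a • x + b • y = 0 → a = 0 ∧ b = 0 := by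
  intro a b hab
  have hb : b = 0 := by
    by_contra hb
    apply hy
    rw [mem_span_singleton]
    refine ⟨-b⁻¹ * a, ?_⟩
    have hy' : b • y = -(a • x) := by
      rw [eq_neg_of_add_eq_zero_right hab]
    have : b⁻¹ • (b • y) = b⁻¹ • (-(a • x)) := by rw [hy']
    rw [smul_smul, inv_mul_cancel₀ hb, one_smul] at this
    rw [this]; module
  subst hb
  rw [zero_smul, add_zero] at hab
  rcases smul_eq_zero.mp hab with h | h
  · exact ⟨h, rfl⟩
  · exact absurd h hx0

lemma span_pair_rank2 {x y : Fin 4 → K}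
    (h : ∀ a b : K, a • x + b • y = 0 → a = 0 ∧ b = 0) :
    finrank K ↥(span K ({x, y} : Set (Fin 4 → K))) = 2 := by
  have hx0 : x ≠ 0 := by
    intro h0; simpa using (h 1 0 (by simp [h0])).1
  have hy0 : y ≠ 0 := by
    intro h0; simpa using (h 0 1 (by simp [h0])).2
  have hins : span K ({x, y} : Set (Fin 4 → K)) = span K {x} ⊔ span K {y} := by
    rw [Submodule.span_insert]
  have hinf : span K ({x} : Set (Fin 4 → K)) ⊓ span K {y} = ⊥ := by
    rw [eq_bot_iff]
    rintro v ⟨hv1, hv2⟩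
    obtain ⟨a, rfl⟩ := mem_span_singleton.mp hv1
    obtain ⟨b, hb⟩ := mem_span_singleton.mp hv2
    have := (h a (-b) (by rw [neg_smul, ← hb]; abel)).1
    subst this; simp
  have key := Submodule.finrank_sup_add_finrank_inf_eq (span K ({x} : Set (Fin 4 → K))) (span K {y})
  rw [hinf, finrank_bot, finrank_span_singleton hx0, finrank_span_singleton hy0] at key
  rw [hins]; omega

lemma span_pair_eq {S : Submodule K (Fin 4 → K)} (hS : finrank K ↥S = 2)
    {x y : Fin 4 → K} (hx : x ∈ S) (hy : y ∈ S)
    (h : ∀ a b : K, a • x + b • y = 0 → a = 0 ∧ b = 0) :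
    S = span K {x, y} := by
  have hle : span K ({x, y} : Set (Fin 4 → K)) ≤ S := by
    rw [span_le]; rintro v (rfl | rfl); exact hx; exact hy
  exact (Submodule.eq_of_le_of_finrank_le hle (by rw [hS, span_pair_rank2 h])).symm

lemma quad_top {x₁ y₁ x₂ y₂ : Fin 4 → K}
    (h4 : ∀ a b c d : K, a•x₁+b•y₁+c•x₂+d•y₂ = 0 → a=0∧b=0∧c=0∧d=0)
    {A : Submodule K (Fin 4 → K)} (m1 : x₁ ∈ A) (m2 : y₁ ∈ A) (m3 : x₂ ∈ A) (m4 : y₂ ∈ A) :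
    A = ⊤ := by
  have r1 : finrank K ↥(span K ({x₁, y₁} : Set (Fin 4 → K))) = 2 :=
    span_pair_rank2 (fun a b hab => by
      have := h4 a b 0 0 (by rw [zero_smul, zero_smul, add_zero, add_zero, hab])
      exact ⟨this.1, this.2.1⟩)
  have r2 : finrank K ↥(span K ({x₂, y₂} : Set (Fin 4 → K))) = 2 :=
    span_pair_rank2 (fun c d hcd => by
      have := h4 0 0 c d (by rw [zero_smul, zero_smul, zero_add, zero_add, hcd])
      exact ⟨this.2.2.1, this.2.2.2⟩)
  have hinf : span K ({x₁, y₁} : Set (Fin 4 → K)) ⊓ span K ({x₂, y₂} : Set (Fin 4 → K)) = ⊥ := by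
    rw [eq_bot_iff]
    rintro v ⟨hv1, hv2⟩
    obtain ⟨a, b, hab⟩ := mem_span_pair.mp hv1
    obtain ⟨c, d, hcd⟩ := mem_span_pair.mp hv2
    have := h4 a b (-c) (-d) (by rw [neg_smul, neg_smul, hab]; rw [← hcd]; abel)
    rw [mem_bot]
    rw [← hab, this.1, this.2.1]; simp
  have key := Submodule.finrank_sup_add_finrank_inf_eq
    (span K ({x₁, y₁} : Set (Fin 4 → K))) (span K ({x₂, y₂} : Set (Fin 4 → K)))
  rw [hinf, finrank_bot, r1, r2] at key
  have htop : span K ({x₁, y₁} : Set (Fin 4 → K)) ⊔ span K ({x₂, y₂} : Set (Fin 4 → K)) = ⊤ :=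
    Submodule.eq_top_of_finrank_eq (by rw [hV4]; omega)
  rw [← top_le_iff, ← htop, sup_le_iff]
  constructor <;> rw [span_le] <;> rintro v (rfl | rfl) <;> assumption

end RegulusAux


theorem regulus_projections_fixed_points
    {K : Type} [Field K]
    (L₁ L₂ L₃ M : Submodule K (Fin 4 → K))
    (h₁ : finrank K L₁ = 2) (h₂ : finrank K L₂ = 2) (h₃ : finrank K L₃ = 2)
    (hM : finrank K M = 2)
    (h₁₂ : L₁ ⊓ L₂ = ⊥) (h₁₃ : L₁ ⊓ L₃ = ⊥) (h₂₃ : L₂ ⊓ L₃ = ⊥)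
    (hx₁ : finrank K ↥(M ⊓ L₁) = 1) (hx₂ : finrank K ↥(M ⊓ L₂) = 1)
    (hx₃ : finrank K ↥(M ⊓ L₃) = 1) :
    -- (a)
    (∀ L : Submodule K (Fin 4 → K), finrank K L = 2 →
      M ⊓ L₁ ≤ L → L ≤ L₁ ⊔ M → L ≠ L₁ → L ≠ M →
      ∀ z : Fin 4 → K, z ∈ L₃ → z ≠ 0 →
        (((L ⊔ ((L₁ ⊔ span K {z}) ⊓ L₂)) ⊓ L₃ = span K {z}) ↔
          span K {z} = M ⊓ L₃)) ∧
    -- (b)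
    ((∃ a : K, a ≠ 0 ∧ a ≠ 1) →  -- |K| > 2
      ∀ L' : Submodule K (Fin 4 → K), finrank K L' = 2 →
      L' ⊓ L₁ ≠ ⊥ → L' ⊓ M ≠ ⊥ → L' ⊓ L₂ = ⊥ → L' ⊓ L₃ = ⊥ →
      ¬ (M ⊓ L₁ ≤ L') → ¬ (M ⊓ L₂ ≤ L') → ¬ (M ⊓ L₃ ≤ L') →
      ∃ P : Submodule K (Fin 4 → K), P ≠ M ⊓ L₃ ∧
        (∃ z : Fin 4 → K, z ≠ 0 ∧ z ∈ L₃ ∧ P = span K {z}) ∧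
        ∀ z : Fin 4 → K, z ∈ L₃ → z ≠ 0 →
          (((L' ⊔ ((L₁ ⊔ span K {z}) ⊓ L₂)) ⊓ L₃ = span K {z}) ↔
            (span K {z} = M ⊓ L₃ ∨ span K {z} = P))) := by
  classical
  obtain ⟨x₁0, hx10ne, hx10mem, hx10span⟩ := RegulusAux.rank1_span _ hx₁
  obtain ⟨x₂0, hx20ne, hx20mem, hx20span⟩ := RegulusAux.rank1_span _ hx₂
  obtain ⟨x₃, hx3ne, hx3mem, hMiL3⟩ := RegulusAux.rank1_span _ hx₃
  obtain ⟨hx10M, hx10L1⟩ := hx10mem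
  obtain ⟨hx20M, hx20L2⟩ := hx20mem
  obtain ⟨hx3M, hx3L3⟩ := hx3mem
  have hMspan0 : M = span K {x₁0, x₂0} :=
    RegulusAux.span_pair_eq hM hx10M hx20M
      (RegulusAux.pair_disj h₁₂ hx10L1 hx20L2 hx10ne hx20ne)
  obtain ⟨α, β, hx3eq⟩ := mem_span_pair.mp (show x₃ ∈ span K {x₁0, x₂0} by
    rw [← hMspan0]; exact hx3M)
  have hα : α ≠ 0 := by
    rintro rfl
    have hmem : x₃ ∈ L₂ ⊓ L₃ := by
      refine ⟨?_, hx3L3⟩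
      rw [← hx3eq, zero_smul, zero_add]
      exact L₂.smul_mem β hx20L2
    rw [h₂₃, mem_bot] at hmem
    exact hx3ne hmem
  have hβ : β ≠ 0 := by
    rintro rfl
    have hmem : x₃ ∈ L₁ ⊓ L₃ := by
      refine ⟨?_, hx3L3⟩
      rw [← hx3eq, zero_smul, add_zero]
      exact L₁.smul_mem α hx10L1
    rw [h₁₃, mem_bot] at hmem
    exact hx3ne hmem
  set x1 : Fin 4 → K := α • x₁0 with hx1def
  set x2 : Fin 4 → K := β • x₂0 with hx2def
  have hx1ne : x1 ≠ 0 := smul_ne_zero hα hx10ne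
  have hx2ne : x2 ≠ 0 := smul_ne_zero hβ hx20ne
  have hx1L1 : x1 ∈ L₁ := L₁.smul_mem _ hx10L1
  have hx2L2 : x2 ∈ L₂ := L₂.smul_mem _ hx20L2
  have hx1M : x1 ∈ M := M.smul_mem _ hx10M
  have hx2M : x2 ∈ M := M.smul_mem _ hx20M
  have hMiL1 : M ⊓ L₁ = span K {x1} := by
    rw [hx10span, hx1def]
    exact (Submodule.span_singleton_smul_eq (isUnit_iff_ne_zero.mpr hα) _).symm
  have hMiL2 : M ⊓ L₂ = span K {x2} := by
    rw [hx20span, hx2def]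
    exact (Submodule.span_singleton_smul_eq (isUnit_iff_ne_zero.mpr hβ) _).symm
  have hx3sum : x₃ = x1 + x2 := hx3eq.symm
  have hMspan : M = span K {x1, x2} :=
    RegulusAux.span_pair_eq hM hx1M hx2M
      (RegulusAux.pair_disj h₁₂ hx1L1 hx2L2 hx1ne hx2ne)
  have hnle3 : ¬ L₃ ≤ span K {x₃} := by
    intro hle
    have := Submodule.finrank_mono hle
    rw [h₃, finrank_span_singleton hx3ne] at this
    omega
  obtain ⟨y₃, hy3L3, hy3ns⟩ := SetLike.not_le_iff_exists.mp hnle3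
  have hL12top : L₁ ⊔ L₂ = ⊤ := by
    have key := Submodule.finrank_sup_add_finrank_inf_eq L₁ L₂
    rw [h₁₂, finrank_bot, h₁, h₂] at key
    exact Submodule.eq_top_of_finrank_eq (by rw [RegulusAux.hV4]; omega)
  obtain ⟨y1, hy1L1, y2, hy2L2, hy12⟩ :=
    Submodule.mem_sup.mp (show y₃ ∈ L₁ ⊔ L₂ by rw [hL12top]; exact mem_top)
  have hy1ns : y1 ∉ span K ({x1} : Set (Fin 4 → K)) := by
    intro hmem
    obtain ⟨c, hc⟩ := mem_span_singleton.mp hmem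
    apply hy3ns
    have hdiff : y₃ - c • x₃ = y2 - c • x2 := by
      rw [← hy12, hx3sum, ← hc]; module
    have hmem2 : y₃ - c • x₃ ∈ L₂ ⊓ L₃ := by
      constructor
      · rw [hdiff]; exact sub_mem hy2L2 (L₂.smul_mem _ hx2L2)
      · exact sub_mem hy3L3 (L₃.smul_mem _ hx3L3)
    rw [h₂₃, mem_bot, sub_eq_zero] at hmem2
    rw [mem_span_singleton]
    exact ⟨c, hmem2.symm⟩
  have hy2ns : y2 ∉ span K ({x2} : Set (Fin 4 → K)) := by
    intro hmem
    obtain ⟨c, hc⟩ := mem_span_singleton.mp hmem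
    apply hy3ns
    have hdiff : y₃ - c • x₃ = y1 - c • x1 := by
      rw [← hy12, hx3sum, ← hc]; module
    have hmem2 : y₃ - c • x₃ ∈ L₁ ⊓ L₃ := by
      constructor
      · rw [hdiff]; exact sub_mem hy1L1 (L₁.smul_mem _ hx1L1)
      · exact sub_mem hy3L3 (L₃.smul_mem _ hx3L3)
    rw [h₁₃, mem_bot, sub_eq_zero] at hmem2
    rw [mem_span_singleton]
    exact ⟨c, hmem2.symm⟩
  have hy1ne : y1 ≠ 0 := by rintro rfl; exact hy1ns (zero_mem _)
  have hy2ne : y2 ≠ 0 := by rintro rfl; exact hy2ns (zero_mem _)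
  have pair1 := RegulusAux.pair_not_mem hx1ne hy1ns
  have pair2 := RegulusAux.pair_not_mem hx2ne hy2ns
  have ind34 := RegulusAux.pair_not_mem hx3ne hy3ns
  have ind4 : ∀ a b c d : K, a•x1 + b•y1 + c•x2 + d•y2 = 0 → a=0∧b=0∧c=0∧d=0 := by
    intro a b c d h
    have hsum : (a • x1 + b • y1) + (c • x2 + d • y2) = 0 := by
      rw [← h]; module
    have h1 : a • x1 + b • y1 = -(c • x2 + d • y2) :=
      eq_neg_of_add_eq_zero_left hsum
    have hmem : a • x1 + b • y1 ∈ L₁ ⊓ L₂ := by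
      constructor
      · exact add_mem (L₁.smul_mem _ hx1L1) (L₁.smul_mem _ hy1L1)
      · rw [h1]; exact neg_mem (add_mem (L₂.smul_mem _ hx2L2) (L₂.smul_mem _ hy2L2))
    rw [h₁₂, mem_bot] at hmem
    obtain ⟨ha, hb⟩ := pair1 a b hmem
    have h2 : c • x2 + d • y2 = 0 := by
      rw [ha, hb] at h
      rw [← h]; module
    obtain ⟨hc, hd⟩ := pair2 c d h2
    exact ⟨ha, hb, hc, hd⟩
  have coeff34 : ∀ a b c d : K, a•x₃ + b•y₃ = c•x₃ + d•y₃ → a = c ∧ b = d := by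
    intro a b c d h
    have hsub : (a•x₃+b•y₃) - (c•x₃+d•y₃) = 0 := sub_eq_zero.mpr h
    have h0 : (a-c)•x₃ + (b-d)•y₃ = 0 := by rw [← hsub]; module
    obtain ⟨h1, h2⟩ := ind34 _ _ h0
    exact ⟨sub_eq_zero.mp h1, sub_eq_zero.mp h2⟩
  have L1span : L₁ = span K {x1, y1} := RegulusAux.span_pair_eq h₁ hx1L1 hy1L1 pair1
  have L3span : L₃ = span K {x₃, y₃} := RegulusAux.span_pair_eq h₃ hx3L3 hy3L3 ind34
  have topmem : ∀ A : Submodule K (Fin 4 → K),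
      x1 ∈ A → y1 ∈ A → x2 ∈ A → y2 ∈ A → A = ⊤ :=
    fun A m1 m2 m3 m4 => RegulusAux.quad_top ind4 m1 m2 m3 m4
  have proj1 : ∀ s t : K, ¬(s = 0 ∧ t = 0) →
      (L₁ ⊔ span K {s•x₃+t•y₃}) ⊓ L₂ = span K {s•x2+t•y2} := by
    intro s t hst
    have hvne : s•x2+t•y2 ≠ 0 := fun h => hst (pair2 s t h)
    have hzne : s•x₃+t•y₃ ≠ 0 := fun h => hst (ind34 s t h)
    have hzL3 : s•x₃+t•y₃ ∈ L₃ := add_mem (L₃.smul_mem _ hx3L3) (L₃.smul_mem _ hy3L3)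
    have hznL1 : s•x₃+t•y₃ ∉ L₁ := by
      intro h
      have hmem : s•x₃+t•y₃ ∈ L₁ ⊓ L₃ := ⟨h, hzL3⟩
      rw [h₁₃, mem_bot] at hmem
      exact hzne hmem
    apply RegulusAux.inf_rank_eq_span (RegulusAux.sup_rank3 L₁ h₁ hzne hznL1) h₂
    · apply topmem
      · exact Submodule.mem_sup_left (Submodule.mem_sup_left hx1L1)
      · exact Submodule.mem_sup_left (Submodule.mem_sup_left hy1L1)
      · exact Submodule.mem_sup_right hx2L2
      · exact Submodule.mem_sup_right hy2L2
    · exact hvne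
    · have hrepr : s•x2+t•y2 = (s•x₃+t•y₃) - (s•x1+t•y1) := by
        rw [hx3sum, ← hy12]; module
      rw [hrepr]
      exact sub_mem (Submodule.mem_sup_right (mem_span_singleton_self _))
        (Submodule.mem_sup_left (add_mem (L₁.smul_mem _ hx1L1) (L₁.smul_mem _ hy1L1)))
    · exact add_mem (L₂.smul_mem _ hx2L2) (L₂.smul_mem _ hy2L2)
  constructor
  · -- part (a)
    intro L hL hx1L hLle hLL1 hLM z hzL3' hzne'
    have hx1L' : x1 ∈ L := hx1L (by rw [hMiL1]; exact mem_span_singleton_self x1)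
    obtain ⟨s, t, hz⟩ := mem_span_pair.mp (show z ∈ span K {x₃, y₃} by
      rw [← L3span]; exact hzL3')
    subst hz
    have hst : ¬(s = 0 ∧ t = 0) := by
      rintro ⟨rfl, rfl⟩
      apply hzne'
      module
    have hnleL : ¬ L ≤ span K {x1} := by
      intro hle
      have := Submodule.finrank_mono hle
      rw [hL, finrank_span_singleton hx1ne] at this
      omega
    obtain ⟨w, hwL, hwns⟩ := SetLike.not_le_iff_exists.mp hnleL
    have pairw := RegulusAux.pair_not_mem hx1ne hwns
    have hLspan : L = span K {x1, w} := RegulusAux.span_pair_eq hL hx1L' hwL pairw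
    have hsub : L₁ ⊔ M ≤ span K ({x1, y1, x2} : Set (Fin 4 → K)) := by
      rw [L1span, hMspan]
      apply sup_le <;> rw [span_le] <;> rintro u (rfl | rfl) <;> apply subset_span <;> simp
    obtain ⟨aw, w', hw'mem, hw'⟩ := mem_span_insert.mp (hsub (hLle hwL))
    obtain ⟨cw, dw, hw''⟩ := mem_span_pair.mp hw'mem
    have hwrep : w = aw•x1 + cw•y1 + dw•x2 := by rw [hw', ← hw'']; module
    have hcw : cw ≠ 0 := by
      rintro rfl
      apply hLM
      have hwM : w ∈ M := by
        have hr : w = aw•x1 + dw•x2 := by rw [hwrep]; module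
        rw [hr]; exact add_mem (M.smul_mem _ hx1M) (M.smul_mem _ hx2M)
      have hle : L ≤ M := by
        rw [hLspan, span_le]; rintro u (rfl | rfl); exacts [hx1M, hwM]
      exact Submodule.eq_of_le_of_finrank_le hle (by rw [hM, hL])
    have hdw : dw ≠ 0 := by
      rintro rfl
      apply hLL1
      have hwL1 : w ∈ L₁ := by
        have hr : w = aw•x1 + cw•y1 := by rw [hwrep]; module
        rw [hr]; exact add_mem (L₁.smul_mem _ hx1L1) (L₁.smul_mem _ hy1L1)
      have hle : L ≤ L₁ := by
        rw [hLspan, span_le]; rintro u (rfl | rfl); exacts [hx1L1, hwL1]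
      exact Submodule.eq_of_le_of_finrank_le hle (by rw [h₁, hL])
    rw [proj1 s t hst]
    have hvne : s•x2+t•y2 ≠ 0 := fun h => hst (pair2 s t h)
    have hvnL : s•x2+t•y2 ∉ L := by
      intro hvL
      obtain ⟨pp, v', hv'mem, hv'⟩ := mem_span_insert.mp (hsub (hLle hvL))
      obtain ⟨qq, rr, hv''⟩ := mem_span_pair.mp hv'mem
      have hmain : s•x2+t•y2 = pp•x1 + qq•y1 + rr•x2 := by rw [hv', ← hv'']; module
      have h0 : pp•x1 + qq•y1 + (rr-s)•x2 + (-t)•y2 = 0 := by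
        have h' := sub_eq_zero.mpr hmain.symm
        rw [← h']; module
      obtain ⟨hpp, hqq, hrr, htneg⟩ := ind4 _ _ _ _ h0
      have ht0 : t = 0 := neg_eq_zero.mp htneg
      have hs0 : s ≠ 0 := fun h => hst ⟨h, ht0⟩
      have hx2L : x2 ∈ L := by
        have hr : x2 = s⁻¹ • (s•x2+t•y2) := by
          rw [ht0, zero_smul, add_zero, smul_smul, inv_mul_cancel₀ hs0, one_smul]
        rw [hr]; exact L.smul_mem _ hvL
      apply hLM
      have hle : M ≤ L := by
        rw [hMspan, span_le]; rintro u (rfl | rfl); exacts [hx1L', hx2L]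
      exact (Submodule.eq_of_le_of_finrank_le hle (by rw [hL, hM])).symm
    have rank3 := RegulusAux.sup_rank3 L hL hvne hvnL
    have hsuptop : (L ⊔ span K {s•x2+t•y2}) ⊔ L₃ = ⊤ := by
      have hx1A : x1 ∈ (L ⊔ span K {s•x2+t•y2}) ⊔ L₃ :=
        Submodule.mem_sup_left (Submodule.mem_sup_left hx1L')
      have hwA : w ∈ (L ⊔ span K {s•x2+t•y2}) ⊔ L₃ :=
        Submodule.mem_sup_left (Submodule.mem_sup_left hwL)
      have hx3A : x₃ ∈ (L ⊔ span K {s•x2+t•y2}) ⊔ L₃ := Submodule.mem_sup_right hx3L3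
      have hy3A : y₃ ∈ (L ⊔ span K {s•x2+t•y2}) ⊔ L₃ := Submodule.mem_sup_right hy3L3
      have hx2A : x2 ∈ (L ⊔ span K {s•x2+t•y2}) ⊔ L₃ := by
        have h' : x₃ - x1 ∈ (L ⊔ span K {s•x2+t•y2}) ⊔ L₃ := sub_mem hx3A hx1A
        have hr : x₃ - x1 = x2 := by rw [hx3sum]; module
        rwa [hr] at h'
      have hy1A : y1 ∈ (L ⊔ span K {s•x2+t•y2}) ⊔ L₃ := by
        have hcwy : w - aw•x1 - dw•x2 = cw•y1 := by rw [hwrep]; module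
        have hr : y1 = cw⁻¹ • (w - aw•x1 - dw•x2) := by
          rw [hcwy, smul_smul, inv_mul_cancel₀ hcw, one_smul]
        rw [hr]
        exact Submodule.smul_mem _ _
          (sub_mem (sub_mem hwA (Submodule.smul_mem _ _ hx1A)) (Submodule.smul_mem _ _ hx2A))
      have hy2A : y2 ∈ (L ⊔ span K {s•x2+t•y2}) ⊔ L₃ := by
        have h' : y₃ - y1 ∈ (L ⊔ span K {s•x2+t•y2}) ⊔ L₃ := sub_mem hy3A hy1A
        have hr : y₃ - y1 = y2 := by rw [← hy12]; module
        rwa [hr] at h'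
      exact topmem _ hx1A hy1A hx2A hy2A
    have hune : (cw*s+t*dw)•x₃ + (cw*t)•y₃ ≠ 0 := by
      intro h
      obtain ⟨h1, h2⟩ := ind34 _ _ h
      have ht0 : t = 0 := by
        rcases mul_eq_zero.mp h2 with h' | h'
        · exact absurd h' hcw
        · exact h'
      apply hst
      refine ⟨?_, ht0⟩
      rw [ht0] at h1
      simpa [mul_eq_zero, hcw] using h1
    have huA : (cw*s+t*dw)•x₃ + (cw*t)•y₃ ∈ L ⊔ span K {s•x2+t•y2} := by
      have hr : (cw*s+t*dw)•x₃ + (cw*t)•y₃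
          = ((cw*s+t*dw) - t*aw)•x1 + t•w + cw•(s•x2+t•y2) := by
        rw [hwrep, hx3sum, ← hy12]; module
      rw [hr]
      exact add_mem (add_mem (Submodule.mem_sup_left (L.smul_mem _ hx1L'))
        (Submodule.mem_sup_left (L.smul_mem _ hwL)))
        (Submodule.mem_sup_right (Submodule.smul_mem _ _ (mem_span_singleton_self _)))
    have huL3 : (cw*s+t*dw)•x₃ + (cw*t)•y₃ ∈ L₃ :=
      add_mem (L₃.smul_mem _ hx3L3) (L₃.smul_mem _ hy3L3)
    rw [RegulusAux.inf_rank_eq_span rank3 h₃ hsuptop hune huA huL3, hMiL3]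
    constructor
    · intro hEq
      have hmem : s•x₃+t•y₃ ∈ span K {(cw*s+t*dw)•x₃ + (cw*t)•y₃} :=
        hEq ▸ mem_span_singleton_self _
      obtain ⟨μ, hμ⟩ := mem_span_singleton.mp hmem
      have hc := coeff34 (μ*(cw*s+t*dw)) (μ*(cw*t)) s t (by rw [← hμ]; module)
      have ht0 : t = 0 := by
        by_contra ht
        have hμcw : μ * cw = 1 := mul_right_cancel₀ ht (by linear_combination hc.2)
        have hzero : μ*t*dw = 0 := by linear_combination hc.1 - s * hμcw
        have hμne : μ ≠ 0 := by
          rintro rfl; rw [zero_mul] at hμcw; exact zero_ne_one hμcw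
        rcases mul_eq_zero.mp hzero with h' | h'
        · rcases mul_eq_zero.mp h' with h'' | h''
          · exact hμne h''
          · exact ht h''
        · exact hdw h'
      rw [ht0, zero_smul, add_zero]
      exact Submodule.span_singleton_smul_eq
        (isUnit_iff_ne_zero.mpr (fun h => hst ⟨h, ht0⟩)) _
    · intro hEq
      have hmem : s•x₃+t•y₃ ∈ span K ({x₃} : Set (Fin 4 → K)) :=
        hEq ▸ mem_span_singleton_self _
      obtain ⟨μ, hμ⟩ := mem_span_singleton.mp hmem
      have hc := coeff34 s t μ 0 (by rw [zero_smul, add_zero, hμ])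
      have ht0 : t = 0 := hc.2
      have hr : (cw*s+t*dw)•x₃ + (cw*t)•y₃ = cw • (s•x₃+t•y₃) := by
        rw [ht0]; module
      rw [hr]
      exact Submodule.span_singleton_smul_eq (isUnit_iff_ne_zero.mpr hcw) _
  · -- part (b)
    rintro - L' hL' hL'1 hL'M hL'2 hL'3 hM1 hM2 hM3
    obtain ⟨p0, hp0mem, hp0ne⟩ := (Submodule.ne_bot_iff _).mp hL'1
    obtain ⟨hp0L', hp0L1⟩ := hp0mem
    obtain ⟨a0, b0, hp0⟩ := mem_span_pair.mp (show p0 ∈ span K {x1, y1} by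
      rw [← L1span]; exact hp0L1)
    have hb0 : b0 ≠ 0 := by
      rintro rfl
      have ha0 : a0 ≠ 0 := by
        rintro rfl
        apply hp0ne
        rw [← hp0]; module
      apply hM1
      rw [hMiL1, span_le, Set.singleton_subset_iff]
      have hr : x1 = a0⁻¹ • p0 := by
        rw [← hp0, zero_smul, add_zero, smul_smul, inv_mul_cancel₀ ha0, one_smul]
      rw [SetLike.mem_coe, hr]
      exact L'.smul_mem _ hp0L'
    have hpL' : (b0⁻¹*a0) • x1 + y1 ∈ L' := by
      have hr : (b0⁻¹*a0) • x1 + y1 = b0⁻¹ • p0 := by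
        rw [← hp0]; match_scalars <;> field_simp
      rw [hr]; exact L'.smul_mem _ hp0L'
    set a : K := b0⁻¹ * a0 with hadef
    obtain ⟨q0, hq0mem, hq0ne⟩ := (Submodule.ne_bot_iff _).mp hL'M
    obtain ⟨hq0L', hq0M⟩ := hq0mem
    obtain ⟨e0, f0, hq0⟩ := mem_span_pair.mp (show q0 ∈ span K {x1, x2} by
      rw [← hMspan]; exact hq0M)
    have hf0 : f0 ≠ 0 := by
      rintro rfl
      have he0' : e0 ≠ 0 := by
        rintro rfl
        apply hq0ne
        rw [← hq0]; module
      apply hM1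
      rw [hMiL1, span_le, Set.singleton_subset_iff]
      have hr : x1 = e0⁻¹ • q0 := by
        rw [← hq0, zero_smul, add_zero, smul_smul, inv_mul_cancel₀ he0', one_smul]
      rw [SetLike.mem_coe, hr]
      exact L'.smul_mem _ hq0L'
    have hqL' : (f0⁻¹*e0) • x1 + x2 ∈ L' := by
      have hr : (f0⁻¹*e0) • x1 + x2 = f0⁻¹ • q0 := by
        rw [← hq0]; match_scalars <;> field_simp
      rw [hr]; exact L'.smul_mem _ hq0L'
    set e : K := f0⁻¹ * e0 with hedef
    have he0 : e ≠ 0 := by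
      intro h
      apply hM2
      rw [hMiL2, span_le, Set.singleton_subset_iff]
      have hr : x2 = e • x1 + x2 := by rw [h, zero_smul, zero_add]
      rw [SetLike.mem_coe, hr]
      exact hqL'
    have he1 : e ≠ 1 := by
      intro h
      apply hM3
      rw [hMiL3, span_le, Set.singleton_subset_iff]
      have hr : x₃ = e • x1 + x2 := by rw [h, one_smul, hx3sum]
      rw [SetLike.mem_coe, hr]
      exact hqL'
    have h1e : (1:K) - e ≠ 0 := sub_ne_zero.mpr (Ne.symm he1)
    refine ⟨span K {a•x₃+y₃}, ?_, ⟨a•x₃+y₃, ?_, ?_, rfl⟩, ?_⟩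
    · rw [hMiL3]
      intro hEq
      have hmem : a•x₃+y₃ ∈ span K ({x₃} : Set (Fin 4 → K)) :=
        hEq ▸ mem_span_singleton_self _
      obtain ⟨μ, hμ⟩ := mem_span_singleton.mp hmem
      have hc := coeff34 μ 0 a 1 (by rw [zero_smul, add_zero, one_smul, hμ])
      exact zero_ne_one hc.2
    · intro h
      exact one_ne_zero (ind34 a 1 (by rw [one_smul]; exact h)).2
    · exact add_mem (L₃.smul_mem _ hx3L3) hy3L3
    · intro z hzL3' hzne'
      obtain ⟨s, t, hz⟩ := mem_span_pair.mp (show z ∈ span K {x₃, y₃} by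
        rw [← L3span]; exact hzL3')
      subst hz
      have hst : ¬(s = 0 ∧ t = 0) := by
        rintro ⟨rfl, rfl⟩
        apply hzne'
        module
      rw [proj1 s t hst]
      have hvne : s•x2+t•y2 ≠ 0 := fun h => hst (pair2 s t h)
      have hvL2 : s•x2+t•y2 ∈ L₂ := add_mem (L₂.smul_mem _ hx2L2) (L₂.smul_mem _ hy2L2)
      have hvnL' : s•x2+t•y2 ∉ L' := by
        intro h
        have hmem : s•x2+t•y2 ∈ L' ⊓ L₂ := ⟨h, hvL2⟩
        rw [hL'2, mem_bot] at hmem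
        exact hvne hmem
      have rank3 := RegulusAux.sup_rank3 L' hL' hvne hvnL'
      have hsuptop : (L' ⊔ span K {s•x2+t•y2}) ⊔ L₃ = ⊤ := by
        have hpA : a•x1+y1 ∈ (L' ⊔ span K {s•x2+t•y2}) ⊔ L₃ :=
          Submodule.mem_sup_left (Submodule.mem_sup_left hpL')
        have hqA : e•x1+x2 ∈ (L' ⊔ span K {s•x2+t•y2}) ⊔ L₃ :=
          Submodule.mem_sup_left (Submodule.mem_sup_left hqL')
        have hx3A : x₃ ∈ (L' ⊔ span K {s•x2+t•y2}) ⊔ L₃ := Submodule.mem_sup_right hx3L3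
        have hy3A : y₃ ∈ (L' ⊔ span K {s•x2+t•y2}) ⊔ L₃ := Submodule.mem_sup_right hy3L3
        have hx1A : x1 ∈ (L' ⊔ span K {s•x2+t•y2}) ⊔ L₃ := by
          have hkey : x₃ - (e•x1+x2) = (1-e)•x1 := by rw [hx3sum]; module
          have hr : x1 = (1-e)⁻¹ • (x₃ - (e•x1+x2)) := by
            rw [hkey, smul_smul, inv_mul_cancel₀ h1e, one_smul]
          rw [hr]
          exact Submodule.smul_mem _ _ (sub_mem hx3A hqA)
        have hx2A : x2 ∈ (L' ⊔ span K {s•x2+t•y2}) ⊔ L₃ := by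
          have h' : (e•x1+x2) - e•x1 ∈ (L' ⊔ span K {s•x2+t•y2}) ⊔ L₃ :=
            sub_mem hqA (Submodule.smul_mem _ _ hx1A)
          have hr : (e•x1+x2) - e•x1 = x2 := by module
          rwa [hr] at h'
        have hy1A : y1 ∈ (L' ⊔ span K {s•x2+t•y2}) ⊔ L₃ := by
          have hr : y1 = (a•x1+y1) - a•x1 := by module
          rw [hr]; exact sub_mem hpA (Submodule.smul_mem _ _ hx1A)
        have hy2A : y2 ∈ (L' ⊔ span K {s•x2+t•y2}) ⊔ L₃ := by
          have h' : y₃ - y1 ∈ (L' ⊔ span K {s•x2+t•y2}) ⊔ L₃ := sub_mem hy3A hy1A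
          have hr : y₃ - y1 = y2 := by rw [← hy12]; module
          rwa [hr] at h'
        exact topmem _ hx1A hy1A hx2A hy2A
      have hune : (a*t-e*s)•x₃ + (t*(1-e))•y₃ ≠ 0 := by
        intro h
        obtain ⟨h1, h2⟩ := ind34 _ _ h
        have ht0 : t = 0 := by
          rcases mul_eq_zero.mp h2 with h' | h'
          · exact h'
          · exact absurd h' h1e
        apply hst
        refine ⟨?_, ht0⟩
        rw [ht0] at h1
        have : e * s = 0 := by linear_combination -h1
        rcases mul_eq_zero.mp this with h' | h'
        · exact absurd h' he0
        · exact h'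
      have huA : (a*t-e*s)•x₃ + (t*(1-e))•y₃ ∈ L' ⊔ span K {s•x2+t•y2} := by
        have hr : (a*t-e*s)•x₃ + (t*(1-e))•y₃
            = (t*(1-e))•(a•x1+y1) + (a*t-s)•(e•x1+x2) + (1-e)•(s•x2+t•y2) := by
          rw [hx3sum, ← hy12]; module
        rw [hr]
        exact add_mem (add_mem (Submodule.mem_sup_left (L'.smul_mem _ hpL'))
          (Submodule.mem_sup_left (L'.smul_mem _ hqL')))
          (Submodule.mem_sup_right (Submodule.smul_mem _ _ (mem_span_singleton_self _)))
      have huL3 : (a*t-e*s)•x₃ + (t*(1-e))•y₃ ∈ L₃ :=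
        add_mem (L₃.smul_mem _ hx3L3) (L₃.smul_mem _ hy3L3)
      rw [RegulusAux.inf_rank_eq_span rank3 h₃ hsuptop hune huA huL3, hMiL3]
      constructor
      · intro hEq
        have hmem : s•x₃+t•y₃ ∈ span K {(a*t-e*s)•x₃ + (t*(1-e))•y₃} :=
          hEq ▸ mem_span_singleton_self _
        obtain ⟨μ, hμ⟩ := mem_span_singleton.mp hmem
        have hc := coeff34 (μ*(a*t-e*s)) (μ*(t*(1-e))) s t (by rw [← hμ]; module)
        rcases eq_or_ne t 0 with ht0 | ht
        · left
          rw [ht0, zero_smul, add_zero]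
          exact Submodule.span_singleton_smul_eq
            (isUnit_iff_ne_zero.mpr (fun h => hst ⟨h, ht0⟩)) _
        · right
          have hμ1 : μ*(1-e) = 1 := mul_right_cancel₀ ht (by linear_combination hc.2)
          have hμne : μ ≠ 0 := by
            rintro rfl; rw [zero_mul] at hμ1; exact zero_ne_one hμ1
          have hzero : μ*(s - a*t) = 0 := by linear_combination s * hμ1 - hc.1
          have hsat : s = a*t := by
            rcases mul_eq_zero.mp hzero with h' | h'
            · exact absurd h' hμne
            · exact sub_eq_zero.mp h'
          have hr : s•x₃+t•y₃ = t•(a•x₃+y₃) := by rw [hsat]; module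
          rw [hr]
          exact Submodule.span_singleton_smul_eq (isUnit_iff_ne_zero.mpr ht) _
      · rintro (hEq | hEq)
        · have hmem : s•x₃+t•y₃ ∈ span K ({x₃} : Set (Fin 4 → K)) :=
            hEq ▸ mem_span_singleton_self _
          obtain ⟨μ, hμ⟩ := mem_span_singleton.mp hmem
          have hc := coeff34 s t μ 0 (by rw [zero_smul, add_zero, hμ])
          have ht0 : t = 0 := hc.2
          have hr : (a*t-e*s)•x₃ + (t*(1-e))•y₃ = (-e) • (s•x₃+t•y₃) := by
            rw [ht0]; module
          rw [hr]
          exact Submodule.span_singleton_smul_eq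
            (isUnit_iff_ne_zero.mpr (neg_ne_zero.mpr he0)) _
        · have hmem : s•x₃+t•y₃ ∈ span K ({a•x₃+y₃} : Set (Fin 4 → K)) :=
            hEq ▸ mem_span_singleton_self _
          obtain ⟨μ, hμ⟩ := mem_span_singleton.mp hmem
          have hc := coeff34 s t (μ*a) μ (by rw [← hμ]; module)
          have ht : t ≠ 0 := by
            intro h
            apply hst
            refine ⟨?_, h⟩
            rw [hc.1, ← hc.2, h, zero_mul]
          have hr : (a*t-e*s)•x₃ + (t*(1-e))•y₃ = (1-e) • (s•x₃+t•y₃) := by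
            rw [hc.1, hc.2]; module
          rw [hr]
          exact Submodule.span_singleton_smul_eq (isUnit_iff_ne_zero.mpr h1e) _
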